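/- arXiv:1201.6480 — 2 statements merged into one kernel-verified Lean document; each statement's English description precedes it below -/
import Mathlib

section
/- For all a, b > 0 with a ≠ b, α·C(a,b) + (1-α)·T(a,b) < S(a,b) < β·C(a,b) + (1-β)·T(a,b) holds with α = (π - 2√2)/(√2·π - 2√2) and β = 1/4, and these constants are best possible. -/
open Real

noncomputable def Amean (a b : ℝ) : ℝ := (a + b) / 2
noncomputable def Gmean (a b : ℝ) : ℝ := Real.sqrt (a * b)
noncomputable def Hmean (a b : ℝ) : ℝ := 2 * a * b / (a + b)
noncomputable def Cmean (a b : ℝ) : ℝ := (a ^ 2 + b ^ 2) / (a + b)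
noncomputable def Cbar (a b : ℝ) : ℝ := 2 * (a ^ 2 + a * b + b ^ 2) / (3 * (a + b))
noncomputable def Smean (a b : ℝ) : ℝ := Real.sqrt ((a ^ 2 + b ^ 2) / 2)
noncomputable def Pmean (a b : ℝ) : ℝ := (a - b) / (2 * Real.arcsin ((a - b) / (a + b)))
noncomputable def Tmean (a b : ℝ) : ℝ := (a - b) / (2 * Real.arctan ((a - b) / (a + b)))

open Set

lemma strictMonoOn_of_hasDerivAt {F F' : ℝ → ℝ} {a b : ℝ}
    (hd : ∀ x, HasDerivAt F (F' x) x)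
    (hp : ∀ x ∈ Ioo a b, 0 < F' x) : StrictMonoOn F (Icc a b) := by
  apply strictMonoOn_of_deriv_pos (convex_Icc a b)
    (fun x _ => (hd x).continuousAt.continuousWithinAt)
  intro x hx
  rw [interior_Icc] at hx
  rw [(hd x).deriv]
  exact hp x hx

lemma strictAntiOn_of_hasDerivAt {F F' : ℝ → ℝ} {a b : ℝ}
    (hd : ∀ x, HasDerivAt F (F' x) x)
    (hp : ∀ x ∈ Ioo a b, F' x < 0) : StrictAntiOn F (Icc a b) := by
  apply strictAntiOn_of_deriv_neg (convex_Icc a b)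
    (fun x _ => (hd x).continuousAt.continuousWithinAt)
  intro x hx
  rw [interior_Icc] at hx
  rw [(hd x).deriv]
  exact hp x hx

lemma pos_on_Ioc {F F' : ℝ → ℝ} {b : ℝ} (hb : 0 < b)
    (hd : ∀ x, HasDerivAt F (F' x) x) (h0 : F 0 = 0)
    (hp : ∀ x ∈ Ioo 0 b, 0 < F' x) : ∀ x ∈ Ioc 0 b, 0 < F x := by
  intro x hx
  have := strictMonoOn_of_hasDerivAt hd hp (a := 0) (b := b)
    ⟨le_refl 0, hb.le⟩ ⟨hx.1.le, hx.2⟩ hx.1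
  rwa [h0] at this

lemma tcos_lt_sin {θ : ℝ} (h0 : 0 < θ) (h1 : θ < π/2) : θ * Real.cos θ < Real.sin θ := by
  have hc : 0 < Real.cos θ := Real.cos_pos_of_mem_Ioo ⟨by linarith [Real.pi_pos], h1⟩
  have := Real.lt_tan h0 h1
  rw [Real.tan_eq_sin_div_cos, lt_div_iff₀ hc] at this
  linarith

noncomputable def Ff : ℝ → ℝ := fun θ => θ + 3*(Real.sin θ*Real.cos θ) - 4*(θ*Real.cos θ)
noncomputable def Ff1 : ℝ → ℝ := fun θ => 1 + 3*(Real.cos θ^2 - Real.sin θ^2) - 4*Real.cos θ + 4*(θ*Real.sin θ)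
noncomputable def Ff2 : ℝ → ℝ := fun θ => -12*(Real.sin θ*Real.cos θ) + 8*Real.sin θ + 4*(θ*Real.cos θ)
noncomputable def Ff3 : ℝ → ℝ := fun θ => -12*Real.cos θ^2 + 12*Real.sin θ^2 + 12*Real.cos θ - 4*(θ*Real.sin θ)
noncomputable def Ff4 : ℝ → ℝ := fun θ => 48*(Real.sin θ*Real.cos θ) - 16*Real.sin θ - 4*(θ*Real.cos θ)

lemma hdFf (θ : ℝ) : HasDerivAt Ff (Ff1 θ) θ := by
  have h : HasDerivAt (fun θ : ℝ => θ + 3*(Real.sin θ*Real.cos θ) - 4*(θ*Real.cos θ))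
      (1 + 3*(Real.cos θ*Real.cos θ + Real.sin θ*(-Real.sin θ)) - 4*(1*Real.cos θ + θ*(-Real.sin θ))) θ :=
    ((hasDerivAt_id θ).add (((Real.hasDerivAt_sin θ).mul (Real.hasDerivAt_cos θ)).const_mul 3)).sub
      (((hasDerivAt_id θ).mul (Real.hasDerivAt_cos θ)).const_mul 4)
  convert h using 1
  · rfl
  · unfold Ff1; ring

lemma hdFf1 (θ : ℝ) : HasDerivAt Ff1 (Ff2 θ) θ := by
  have h : HasDerivAt (fun θ : ℝ => 1 + 3*(Real.cos θ^2 - Real.sin θ^2) - 4*Real.cos θ + 4*(θ*Real.sin θ))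
      (0 + 3*(2*Real.cos θ^(2-1)*(-Real.sin θ) - 2*Real.sin θ^(2-1)*Real.cos θ) - 4*(-Real.sin θ) + 4*(1*Real.sin θ + θ*Real.cos θ)) θ := by
    exact (((hasDerivAt_const θ (1:ℝ)).add ((((Real.hasDerivAt_cos θ).pow 2).sub ((Real.hasDerivAt_sin θ).pow 2)).const_mul 3)).sub ((Real.hasDerivAt_cos θ).const_mul 4)).add (((hasDerivAt_id θ).mul (Real.hasDerivAt_sin θ)).const_mul 4)
  convert h using 1
  · rfl
  · unfold Ff2; ring

lemma hdFf2 (θ : ℝ) : HasDerivAt Ff2 (Ff3 θ) θ := by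
  have h : HasDerivAt (fun θ : ℝ => -12*(Real.sin θ*Real.cos θ) + 8*Real.sin θ + 4*(θ*Real.cos θ))
      (-12*(Real.cos θ*Real.cos θ + Real.sin θ*(-Real.sin θ)) + 8*(Real.cos θ) + 4*(1*Real.cos θ + θ*(-Real.sin θ))) θ :=
    ((((Real.hasDerivAt_sin θ).mul (Real.hasDerivAt_cos θ)).const_mul (-12)).add ((Real.hasDerivAt_sin θ).const_mul 8)).add (((hasDerivAt_id θ).mul (Real.hasDerivAt_cos θ)).const_mul 4)
  convert h using 1
  · rfl
  · unfold Ff3; ring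

lemma hdFf3 (θ : ℝ) : HasDerivAt Ff3 (Ff4 θ) θ := by
  have h : HasDerivAt (fun θ : ℝ => -12*Real.cos θ^2 + 12*Real.sin θ^2 + 12*Real.cos θ - 4*(θ*Real.sin θ))
      (-12*(2*Real.cos θ^(2-1)*(-Real.sin θ)) + 12*(2*Real.sin θ^(2-1)*Real.cos θ) + 12*(-Real.sin θ) - 4*(1*Real.sin θ + θ*Real.cos θ)) θ :=
    (((((Real.hasDerivAt_cos θ).pow 2).const_mul (-12)).add (((Real.hasDerivAt_sin θ).pow 2).const_mul 12)).add ((Real.hasDerivAt_cos θ).const_mul 12)).sub (((hasDerivAt_id θ).mul (Real.hasDerivAt_sin θ)).const_mul 4)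
  convert h using 1
  · rfl
  · unfold Ff4; ring

lemma cos_ge_on {θ : ℝ} (h0 : 0 < θ) (h1 : θ ≤ π/4) : Real.sqrt 2/2 ≤ Real.cos θ := by
  have : Real.cos (π/4) ≤ Real.cos θ :=
    Real.cos_le_cos_of_nonneg_of_le_pi h0.le (by linarith [Real.pi_pos]) h1
  rwa [Real.cos_pi_div_four] at this

lemma sqrt2_lb : (1.414213 : ℝ) < Real.sqrt 2 := by
  have h := Real.sq_sqrt (by norm_num : (2:ℝ) ≥ 0)
  nlinarith [Real.sqrt_nonneg 2]

lemma sqrt2_ub : Real.sqrt 2 < 1.414214 := by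
  have h := Real.sq_sqrt (by norm_num : (2:ℝ) ≥ 0)
  nlinarith [Real.sqrt_nonneg 2]

lemma Ff4_pos : ∀ θ ∈ Ioo 0 (π/4), 0 < Ff4 θ := by
  intro θ hθ
  have hpi : θ < π/2 := by have := Real.pi_pos; nlinarith [hθ.2]
  have hs : 0 < Real.sin θ := Real.sin_pos_of_pos_of_lt_pi hθ.1 (by nlinarith [Real.pi_pos])
  have htc : θ * Real.cos θ < Real.sin θ := tcos_lt_sin hθ.1 hpi
  have hc : Real.sqrt 2/2 ≤ Real.cos θ := cos_ge_on hθ.1 hθ.2.le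
  have h2 : (0:ℝ) < 12 * Real.cos θ - 5 := by nlinarith [sqrt2_lb]
  unfold Ff4
  nlinarith [mul_pos hs h2]

lemma Ff3_pos : ∀ θ ∈ Ioc 0 (π/4), 0 < Ff3 θ := by
  apply pos_on_Ioc (by positivity) hdFf3
  · unfold Ff3; simp
  · exact Ff4_pos

lemma Ff2_pos : ∀ θ ∈ Ioc 0 (π/4), 0 < Ff2 θ := by
  apply pos_on_Ioc (by positivity) hdFf2
  · unfold Ff2; simp
  · exact fun x hx => Ff3_pos x ⟨hx.1, hx.2.le⟩

lemma Ff1_pos : ∀ θ ∈ Ioc 0 (π/4), 0 < Ff1 θ := by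
  apply pos_on_Ioc (by positivity) hdFf1
  · unfold Ff1; simp; norm_num
  · exact fun x hx => Ff2_pos x ⟨hx.1, hx.2.le⟩

lemma Ff_pos : ∀ θ ∈ Ioc 0 (π/4), 0 < Ff θ := by
  apply pos_on_Ioc (by positivity) hdFf
  · unfold Ff; simp
  · exact fun x hx => Ff1_pos x ⟨hx.1, hx.2.le⟩

section
variable (A : ℝ)

noncomputable def Gg : ℝ → ℝ := fun θ => θ*Real.cos θ - A*θ - (1-A)*(Real.sin θ*Real.cos θ)
noncomputable def Gg1 : ℝ → ℝ := fun θ => Real.cos θ - θ*Real.sin θ - A - (1-A)*(Real.cos θ^2 - Real.sin θ^2)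
noncomputable def Gg2 : ℝ → ℝ := fun θ => -2*Real.sin θ - θ*Real.cos θ + 4*(1-A)*(Real.sin θ*Real.cos θ)
noncomputable def Gg3 : ℝ → ℝ := fun θ => -3*Real.cos θ + θ*Real.sin θ + 4*(1-A)*(Real.cos θ^2 - Real.sin θ^2)
noncomputable def Gg4 : ℝ → ℝ := fun θ => 4*Real.sin θ + θ*Real.cos θ - 16*(1-A)*(Real.sin θ*Real.cos θ)

lemma hdGg (θ : ℝ) : HasDerivAt (Gg A) (Gg1 A θ) θ := by
  have h : HasDerivAt (fun θ : ℝ => θ*Real.cos θ - A*θ - (1-A)*(Real.sin θ*Real.cos θ))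
      ((1*Real.cos θ + θ*(-Real.sin θ)) - A*1 - (1-A)*(Real.cos θ*Real.cos θ + Real.sin θ*(-Real.sin θ))) θ :=
    (((hasDerivAt_id θ).mul (Real.hasDerivAt_cos θ)).sub ((hasDerivAt_id θ).const_mul A)).sub
      (((Real.hasDerivAt_sin θ).mul (Real.hasDerivAt_cos θ)).const_mul (1-A))
  convert h using 1
  · rfl
  · unfold Gg1; ring

lemma hdGg1 (θ : ℝ) : HasDerivAt (Gg1 A) (Gg2 A θ) θ := by
  have h : HasDerivAt (fun θ : ℝ => Real.cos θ - θ*Real.sin θ - A - (1-A)*(Real.cos θ^2 - Real.sin θ^2))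
      ((-Real.sin θ) - (1*Real.sin θ + θ*Real.cos θ) - 0 - (1-A)*(2*Real.cos θ^(2-1)*(-Real.sin θ) - 2*Real.sin θ^(2-1)*Real.cos θ)) θ :=
    (((Real.hasDerivAt_cos θ).sub ((hasDerivAt_id θ).mul (Real.hasDerivAt_sin θ))).sub (hasDerivAt_const θ A)).sub
      ((((Real.hasDerivAt_cos θ).pow 2).sub ((Real.hasDerivAt_sin θ).pow 2)).const_mul (1-A))
  convert h using 1
  · rfl
  · unfold Gg2; ring

lemma hdGg2 (θ : ℝ) : HasDerivAt (Gg2 A) (Gg3 A θ) θ := by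
  have h : HasDerivAt (fun θ : ℝ => -2*Real.sin θ - θ*Real.cos θ + 4*(1-A)*(Real.sin θ*Real.cos θ))
      (-2*Real.cos θ - (1*Real.cos θ + θ*(-Real.sin θ)) + 4*(1-A)*(Real.cos θ*Real.cos θ + Real.sin θ*(-Real.sin θ))) θ :=
    (((Real.hasDerivAt_sin θ).const_mul (-2)).sub ((hasDerivAt_id θ).mul (Real.hasDerivAt_cos θ))).add
      (((Real.hasDerivAt_sin θ).mul (Real.hasDerivAt_cos θ)).const_mul (4*(1-A)))
  convert h using 1
  · rfl
  · unfold Gg3; ring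

lemma hdGg3 (θ : ℝ) : HasDerivAt (Gg3 A) (Gg4 A θ) θ := by
  have h : HasDerivAt (fun θ : ℝ => -3*Real.cos θ + θ*Real.sin θ + 4*(1-A)*(Real.cos θ^2 - Real.sin θ^2))
      (-3*(-Real.sin θ) + (1*Real.sin θ + θ*Real.cos θ) + 4*(1-A)*(2*Real.cos θ^(2-1)*(-Real.sin θ) - 2*Real.sin θ^(2-1)*Real.cos θ)) θ :=
    ((((Real.hasDerivAt_cos θ)).const_mul (-3)).add ((hasDerivAt_id θ).mul (Real.hasDerivAt_sin θ))).add
      ((((Real.hasDerivAt_cos θ).pow 2).sub ((Real.hasDerivAt_sin θ).pow 2)).const_mul (4*(1-A)))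
  convert h using 1
  · rfl
  · unfold Gg4; ring

end

lemma Gg_pos (A : ℝ) (h1 : 5 < 8*Real.sqrt 2*(1-A)) (h2 : A < 1/4)
    (h3 : 2*(1-A) < Real.sqrt 2 + π*Real.sqrt 2/8)
    (h4 : Real.sqrt 2/2 - π*Real.sqrt 2/8 < A)
    (h5 : (π/4)*(Real.sqrt 2/2) - A*(π/4) - (1-A)*(1/2) = 0) :
    ∀ θ ∈ Ioo 0 (π/4), 0 < Gg A θ := by
  have hpi4 : (0:ℝ) < π/4 := by positivity
  have hs2 : Real.sqrt 2 ^ 2 = 2 := Real.sq_sqrt (by norm_num)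
  have h1A : 0 < 1 - A := by nlinarith [sqrt2_ub, sqrt2_lb]
  -- G4 < 0
  have hG4 : ∀ θ ∈ Ioo 0 (π/4), Gg4 A θ < 0 := by
    intro θ hθ
    have hpi : θ < π/2 := by nlinarith [hθ.2, Real.pi_pos]
    have hs : 0 < Real.sin θ := Real.sin_pos_of_pos_of_lt_pi hθ.1 (by nlinarith [Real.pi_pos])
    have htc : θ * Real.cos θ < Real.sin θ := tcos_lt_sin hθ.1 hpi
    have hc : Real.sqrt 2/2 ≤ Real.cos θ := cos_ge_on hθ.1 hθ.2.le
    have hkey : 5 < 16*(1-A)*Real.cos θ := by nlinarith [sqrt2_lb]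
    unfold Gg4
    nlinarith [mul_pos hs (by linarith : (0:ℝ) < 16*(1-A)*Real.cos θ - 5)]
  have hG3anti : StrictAntiOn (Gg3 A) (Icc 0 (π/4)) := strictAntiOn_of_hasDerivAt (hdGg3 A) hG4
  have hG3_0 : 0 < Gg3 A 0 := by unfold Gg3; simp; nlinarith
  have hG3_b : Gg3 A (π/4) < 0 := by
    unfold Gg3
    simp only [Real.cos_pi_div_four, Real.sin_pi_div_four]
    nlinarith [Real.pi_gt_d6, Real.pi_lt_d6, sqrt2_lb, sqrt2_ub]
  obtain ⟨c, hc, hGc⟩ : ∃ c ∈ Ioo 0 (π/4), Gg3 A c = 0 := by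
    have h := intermediate_value_Ioo' (a := (0:ℝ)) (b := π/4) hpi4.le
      (fun x _ => (hdGg3 A x).continuousAt.continuousWithinAt)
    obtain ⟨c, hcc, hval⟩ := h ⟨hG3_b, hG3_0⟩
    exact ⟨c, hcc, hval⟩
  have hG3pos : ∀ θ ∈ Ioo 0 c, 0 < Gg3 A θ := by
    intro θ hθ
    have := hG3anti ⟨hθ.1.le, by linarith [hc.2, hθ.2]⟩ ⟨hc.1.le, hc.2.le⟩ hθ.2
    rwa [hGc] at this
  have hG3neg : ∀ θ ∈ Ioo c (π/4), Gg3 A θ < 0 := by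
    intro θ hθ
    have := hG3anti ⟨hc.1.le, hc.2.le⟩ ⟨by linarith [hc.1, hθ.1], hθ.2.le⟩ hθ.1
    rwa [hGc] at this
  -- G2
  have hG2pos1 : ∀ θ ∈ Ioc 0 c, 0 < Gg2 A θ := by
    apply pos_on_Ioc hc.1 (hdGg2 A) (by unfold Gg2; simp) hG3pos
  have hG2anti : StrictAntiOn (Gg2 A) (Icc c (π/4)) := strictAntiOn_of_hasDerivAt (hdGg2 A) hG3neg
  have hG2_b : Gg2 A (π/4) < 0 := by
    unfold Gg2
    simp only [Real.cos_pi_div_four, Real.sin_pi_div_four]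
    nlinarith [hs2]
  have hG2_c : 0 < Gg2 A c := hG2pos1 c ⟨hc.1, le_refl c⟩
  obtain ⟨d, hd, hGd⟩ : ∃ d ∈ Ioo c (π/4), Gg2 A d = 0 := by
    have h := intermediate_value_Ioo' (a := c) (b := π/4) hc.2.le
      (fun x _ => (hdGg2 A x).continuousAt.continuousWithinAt)
    obtain ⟨d, hdd, hval⟩ := h ⟨hG2_b, hG2_c⟩
    exact ⟨d, hdd, hval⟩
  have hG2pos : ∀ θ ∈ Ioo 0 d, 0 < Gg2 A θ := by
    intro θ hθ
    rcases le_or_gt θ c with h | h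
    · exact hG2pos1 θ ⟨hθ.1, h⟩
    · have := hG2anti ⟨h.le, by linarith [hd.2, hθ.2]⟩ ⟨hd.1.le, hd.2.le⟩ hθ.2
      rwa [hGd] at this
  have hG2neg : ∀ θ ∈ Ioo d (π/4), Gg2 A θ < 0 := by
    intro θ hθ
    have := hG2anti ⟨hd.1.le, hd.2.le⟩ ⟨by linarith [hd.1, hθ.1, hc.1], hθ.2.le⟩ hθ.1
    rwa [hGd] at this
  -- G1
  have hd0 : 0 < d := hc.1.trans hd.1
  have hG1pos1 : ∀ θ ∈ Ioc 0 d, 0 < Gg1 A θ := by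
    apply pos_on_Ioc hd0 (hdGg1 A) (by unfold Gg1; simp) hG2pos
  have hG1anti : StrictAntiOn (Gg1 A) (Icc d (π/4)) := strictAntiOn_of_hasDerivAt (hdGg1 A) hG2neg
  have hG1_b : Gg1 A (π/4) < 0 := by
    unfold Gg1
    simp only [Real.cos_pi_div_four, Real.sin_pi_div_four]
    nlinarith [hs2]
  have hG1_d : 0 < Gg1 A d := hG1pos1 d ⟨hd0, le_refl d⟩
  obtain ⟨e, he, hGe⟩ : ∃ e ∈ Ioo d (π/4), Gg1 A e = 0 := by
    have h := intermediate_value_Ioo' (a := d) (b := π/4) hd.2.le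
      (fun x _ => (hdGg1 A x).continuousAt.continuousWithinAt)
    obtain ⟨e, hee, hval⟩ := h ⟨hG1_b, hG1_d⟩
    exact ⟨e, hee, hval⟩
  have hG1pos : ∀ θ ∈ Ioo 0 e, 0 < Gg1 A θ := by
    intro θ hθ
    rcases le_or_gt θ d with h | h
    · exact hG1pos1 θ ⟨hθ.1, h⟩
    · have := hG1anti ⟨h.le, by linarith [he.2, hθ.2]⟩ ⟨he.1.le, he.2.le⟩ hθ.2
      rwa [hGe] at this
  have hG1neg : ∀ θ ∈ Ioo e (π/4), Gg1 A θ < 0 := by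
    intro θ hθ
    have := hG1anti ⟨he.1.le, he.2.le⟩ ⟨by linarith [he.1, hθ.1, hd0], hθ.2.le⟩ hθ.1
    rwa [hGe] at this
  -- G
  have he0 : 0 < e := hd0.trans he.1
  have hGpos1 : ∀ θ ∈ Ioc 0 e, 0 < Gg A θ := by
    apply pos_on_Ioc he0 (hdGg A) (by unfold Gg; simp) hG1pos
  have hGanti : StrictAntiOn (Gg A) (Icc e (π/4)) := strictAntiOn_of_hasDerivAt (hdGg A) hG1neg
  have hG_b : Gg A (π/4) = 0 := by
    unfold Gg
    simp only [Real.cos_pi_div_four, Real.sin_pi_div_four]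
    linear_combination h5 - (1-A)/4 * hs2
  intro θ hθ
  rcases le_or_gt θ e with h | h
  · exact hGpos1 θ ⟨hθ.1, h⟩
  · have := hGanti ⟨h.le, hθ.2.le⟩ ⟨he.2.le, le_refl _⟩ hθ.2
    rwa [hG_b] at this


noncomputable def A0 : ℝ := (π - 2*Real.sqrt 2)/(Real.sqrt 2*π - 2*Real.sqrt 2)

lemma A0_den_pos : 0 < Real.sqrt 2*π - 2*Real.sqrt 2 := by
  nlinarith [sqrt2_lb, sqrt2_ub, Real.pi_gt_d6]

lemma A0_eq : A0 * (Real.sqrt 2*π - 2*Real.sqrt 2) = π - 2*Real.sqrt 2 :=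
  div_mul_cancel₀ _ A0_den_pos.ne'

lemma A0_lb : (0.1939 : ℝ) < A0 := by
  have h := A0_eq
  have hd := A0_den_pos
  nlinarith [sqrt2_lb, sqrt2_ub, Real.pi_gt_d6, Real.pi_lt_d6]

lemma A0_ub : A0 < (0.194 : ℝ) := by
  have h := A0_eq
  have hd := A0_den_pos
  nlinarith [sqrt2_lb, sqrt2_ub, Real.pi_gt_d6, Real.pi_lt_d6]

lemma A0_h1 : 5 < 8*Real.sqrt 2*(1-A0) := by nlinarith [sqrt2_lb, A0_ub]
lemma A0_h2 : A0 < 1/4 := by nlinarith [A0_ub]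
lemma A0_h3 : 2*(1-A0) < Real.sqrt 2 + π*Real.sqrt 2/8 := by
  nlinarith [sqrt2_lb, A0_lb, Real.pi_gt_d6]
lemma A0_h4 : Real.sqrt 2/2 - π*Real.sqrt 2/8 < A0 := by
  nlinarith [sqrt2_ub, sqrt2_lb, A0_lb, Real.pi_gt_d6]
lemma A0_h5 : (π/4)*(Real.sqrt 2/2) - A0*(π/4) - (1-A0)*(1/2) = 0 := by
  have hs2 : Real.sqrt 2 ^ 2 = 2 := Real.sq_sqrt (by norm_num)
  have h := A0_eq
  linear_combination (-Real.sqrt 2/8) * h + ((A0*π - 2*A0 + 2)/8) * hs2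

lemma arctan_mem {x : ℝ} (hx0 : 0 < x) (hx1 : x < 1) : Real.arctan x ∈ Ioo 0 (π/4) := by
  constructor
  · rw [← Real.arctan_zero]; exact Real.arctan_strictMono hx0
  · rw [← Real.arctan_one]; exact Real.arctan_strictMono hx1

lemma core_TC {x : ℝ} (hx0 : 0 < x) (hx1 : x < 1) : x/Real.arctan x < 1+x^2 := by
  obtain ⟨hθ0, hθ1⟩ := arctan_mem hx0 hx1
  set θ := Real.arctan x with hθ
  set y := Real.sqrt (1+x^2) with hy
  have hy0 : 0 < y := Real.sqrt_pos.2 (by positivity)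
  have hy2 : y^2 = 1+x^2 := Real.sq_sqrt (by positivity)
  have hsin : Real.sin θ = x/y := Real.sin_arctan x
  have hcos : Real.cos θ = 1/y := Real.cos_arctan x
  have hslt : Real.sin θ < θ := Real.sin_lt hθ0
  have : x/y < θ := by rw [← hsin]; exact hslt
  rw [div_lt_iff₀ hy0] at this
  rw [div_lt_iff₀ hθ0, ← hy2]
  nlinarith [hy2, sq_nonneg x, sq_nonneg (y-1), hy0]

lemma core_upper {x : ℝ} (hx0 : 0 < x) (hx1 : x < 1) :
    Real.sqrt (1+x^2) < (1/4)*(1+x^2) + (3/4)*(x/Real.arctan x) := by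
  obtain ⟨hθ0, hθ1⟩ := arctan_mem hx0 hx1
  set θ := Real.arctan x with hθdef
  set y := Real.sqrt (1+x^2) with hy
  have hy0 : 0 < y := Real.sqrt_pos.2 (by positivity)
  have hy2 : y^2 = 1+x^2 := Real.sq_sqrt (by positivity)
  have hF : 0 < Ff θ := Ff_pos θ ⟨hθ0, hθ1.le⟩
  unfold Ff at hF
  rw [Real.sin_arctan, Real.cos_arctan, ← hy] at hF
  have heq : (θ + 3*(x/y*(1/y)) - 4*(θ*(1/y)))*y^2 = θ*y^2 + 3*x - 4*θ*y := by
    field_simp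
  have hF' : 0 < θ*y^2 + 3*x - 4*θ*y := by
    rw [← heq]; exact mul_pos hF (by positivity)
  have hgoal : (1/4)*(1+x^2) + (3/4)*(x/θ) = (θ*(1+x^2) + 3*x)/(4*θ) := by
    field_simp
  rw [hgoal, lt_div_iff₀ (by positivity), ← hy2]
  linarith [hF']

lemma core_lower {x : ℝ} (hx0 : 0 < x) (hx1 : x < 1) :
    A0*(1+x^2) + (1-A0)*(x/Real.arctan x) < Real.sqrt (1+x^2) := by
  obtain ⟨hθ0, hθ1⟩ := arctan_mem hx0 hx1
  set θ := Real.arctan x with hθdef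
  set y := Real.sqrt (1+x^2) with hy
  have hy0 : 0 < y := Real.sqrt_pos.2 (by positivity)
  have hy2 : y^2 = 1+x^2 := Real.sq_sqrt (by positivity)
  have hG : 0 < Gg A0 θ := Gg_pos A0 A0_h1 A0_h2 A0_h3 A0_h4 A0_h5 θ ⟨hθ0, hθ1⟩
  unfold Gg at hG
  rw [Real.sin_arctan, Real.cos_arctan, ← hy] at hG
  have heq : (θ*(1/y) - A0*θ - (1-A0)*(x/y*(1/y)))*y^2 = θ*y - A0*θ*y^2 - (1-A0)*x := by
    field_simp
  have hG' : 0 < θ*y - A0*θ*y^2 - (1-A0)*x := by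
    rw [← heq]; exact mul_pos hG (by positivity)
  have hgoal : A0*(1+x^2) + (1-A0)*(x/θ) = (A0*θ*(1+x^2) + (1-A0)*x)/θ := by
    field_simp
  rw [hgoal, div_lt_iff₀ (by positivity), ← hy2]
  linarith [hG']

lemma Cmean_symm (a b : ℝ) : Cmean a b = Cmean b a := by
  unfold Cmean; rw [add_comm (a^2), add_comm a]

lemma Smean_symm (a b : ℝ) : Smean a b = Smean b a := by
  unfold Smean; rw [add_comm (a^2)]

lemma Tmean_symm (a b : ℝ) : Tmean a b = Tmean b a := by
  unfold Tmean
  rw [show b - a = -(a-b) by ring, show b + a = a + b by ring,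
    neg_div (a+b) (a-b), Real.arctan_neg, mul_neg, div_neg, neg_div, neg_neg]

lemma mean_reps {a b : ℝ} (hb : 0 < b) (hab : b < a) :
    0 < (a-b)/(a+b) ∧ (a-b)/(a+b) < 1 ∧
    Cmean a b = (a+b)/2*(1+((a-b)/(a+b))^2) ∧
    Smean a b = (a+b)/2*Real.sqrt (1+((a-b)/(a+b))^2) ∧
    Tmean a b = (a+b)/2*(((a-b)/(a+b))/Real.arctan ((a-b)/(a+b))) := by
  have hab0 : 0 < a + b := by linarith
  have hx0 : 0 < (a-b)/(a+b) := div_pos (by linarith) hab0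
  have hx1 : (a-b)/(a+b) < 1 := by rw [div_lt_one hab0]; linarith
  refine ⟨hx0, hx1, ?_, ?_, ?_⟩
  · unfold Cmean; field_simp; ring
  · unfold Smean
    rw [show (a^2+b^2)/2 = ((a+b)/2)^2*(1+((a-b)/(a+b))^2) by field_simp; ring,
      Real.sqrt_mul (sq_nonneg _), Real.sqrt_sq (by positivity)]
  · unfold Tmean
    have hθ : Real.arctan ((a-b)/(a+b)) ≠ 0 := by
      have := (arctan_mem hx0 hx1).1; linarith
    field_simp

lemma part1_sided {a b : ℝ} (hb : 0 < b) (hab : b < a) :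
    A0*Cmean a b + (1-A0)*Tmean a b < Smean a b ∧
    Smean a b < (1/4)*Cmean a b + (3/4)*Tmean a b ∧ Tmean a b < Cmean a b := by
  obtain ⟨hx0, hx1, hC, hS, hT⟩ := mean_reps hb hab
  have hs : (0:ℝ) < (a+b)/2 := by linarith
  rw [hC, hS, hT]
  refine ⟨?_, ?_, ?_⟩
  · nlinarith [mul_lt_mul_of_pos_left (core_lower hx0 hx1) hs]
  · nlinarith [mul_lt_mul_of_pos_left (core_upper hx0 hx1) hs]
  · nlinarith [mul_lt_mul_of_pos_left (core_TC hx0 hx1) hs]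

lemma part1 {a b : ℝ} (ha : 0 < a) (hb : 0 < b) (hne : a ≠ b) :
    A0*Cmean a b + (1-A0)*Tmean a b < Smean a b ∧
    Smean a b < (1/4)*Cmean a b + (3/4)*Tmean a b ∧ Tmean a b < Cmean a b := by
  rcases hne.lt_or_gt with h | h
  · rw [Cmean_symm, Smean_symm, Tmean_symm]; exact part1_sided ha h
  · exact part1_sided hb h

open Topology Filter

noncomputable def ff : ℝ → ℝ :=
  fun x => (Real.sqrt (1+x^2) - x/Real.arctan x)/((1+x^2) - x/Real.arctan x)

lemma means_at {x : ℝ} (hx0 : 0 < x) (hx1 : x < 1) :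
    Cmean (1+x) (1-x) = 1+x^2 ∧ Smean (1+x) (1-x) = Real.sqrt (1+x^2) ∧
    Tmean (1+x) (1-x) = x/Real.arctan x := by
  refine ⟨?_, ?_, ?_⟩
  · unfold Cmean
    rw [show (1+x)+(1-x) = (2:ℝ) by ring, show (1+x)^2+(1-x)^2 = 2*(1+x^2) by ring]
    ring
  · unfold Smean
    rw [show ((1+x)^2+(1-x)^2)/2 = 1+x^2 by ring]
  · unfold Tmean
    rw [show (1+x)-(1-x) = 2*x by ring, show (1+x)+(1-x) = (2:ℝ) by ring,
      show (2*x)/2 = x by ring]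
    rw [mul_div_mul_left x (Real.arctan x) two_ne_zero]

lemma ff_at_one : ff 1 = A0 := by
  unfold ff A0
  rw [Real.arctan_one, show (1:ℝ)+1^2 = 2 by norm_num]
  have hs2 : Real.sqrt 2 ^ 2 = 2 := Real.sq_sqrt (by norm_num)
  have hpi := Real.pi_gt_d6
  have hpi' := Real.pi_lt_d6
  have hd1 : (2:ℝ) - 1/(π/4) ≠ 0 := by
    have h4pi : 4/π < 2 := by rw [div_lt_iff₀ Real.pi_pos]; nlinarith
    have h : (1:ℝ)/(π/4) = 4/π := by field_simp
    rw [h]; linarith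
  have hd2 : Real.sqrt 2*π - 2*Real.sqrt 2 ≠ 0 := A0_den_pos.ne'
  rw [div_eq_div_iff hd1 hd2]
  field_simp
  ring_nf
  linear_combination (π^2 - 2*π)*hs2

lemma nebot_one : (𝓝[Ioo (0:ℝ) 1] (1:ℝ)).NeBot := by
  apply mem_closure_iff_nhdsWithin_neBot.mp
  rw [closure_Ioo (by norm_num : (0:ℝ) ≠ 1)]
  exact ⟨by norm_num, le_refl 1⟩

lemma nebot_zero : (𝓝[Ioo (0:ℝ) 1] (0:ℝ)).NeBot := by
  apply mem_closure_iff_nhdsWithin_neBot.mp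
  rw [closure_Ioo (by norm_num : (0:ℝ) ≠ 1)]
  exact ⟨le_refl 0, by norm_num⟩

lemma tendsto_ff_one : Filter.Tendsto ff (𝓝[Ioo (0:ℝ) 1] 1) (𝓝 A0) := by
  have h2 : ContinuousAt (fun x:ℝ => x/Real.arctan x) 1 :=
    ContinuousAt.div continuousAt_id Real.continuous_arctan.continuousAt
      (by rw [Real.arctan_one]; positivity)
  have h1 : ContinuousAt (fun x:ℝ => Real.sqrt (1+x^2)) 1 :=
    (Real.continuous_sqrt.comp (by continuity : Continuous fun x:ℝ => 1+x^2)).continuousAt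
  have hpi := Real.pi_gt_d6
  have hd : ((1:ℝ)+1^2) - 1/Real.arctan 1 ≠ 0 := by
    rw [Real.arctan_one, show (1:ℝ)/(π/4) = 4/π by field_simp]
    have : 4/π < 2 := by rw [div_lt_iff₀ Real.pi_pos]; nlinarith
    norm_num
    intro hco
    nlinarith [hco]
  have hc : ContinuousAt ff 1 := by
    apply ContinuousAt.div (h1.sub h2) ((continuousAt_const.add (by fun_prop)).sub h2)
    simpa using hd
  have ht := hc.tendsto
  rw [ff_at_one] at ht
  exact tendsto_nhdsWithin_of_tendsto_nhds ht

lemma arctan_lt_self' {x : ℝ} (hx : 0 < x) : Real.arctan x < x := by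
  have h0 : 0 < Real.arctan x := by rw [← Real.arctan_zero]; exact Real.arctan_strictMono hx
  have h2 : Real.arctan x < π/2 := (Real.arctan_mem_Ioo x).2
  have := Real.lt_tan h0 h2
  rwa [Real.tan_arctan] at this

lemma ff_eq_phi {x : ℝ} (hx0 : 0 < x) (hx1 : x < 1) :
    ff x = Real.cos (Real.arctan x)*(Real.arctan x - Real.sin (Real.arctan x))/
      (Real.arctan x - Real.sin (Real.arctan x)*Real.cos (Real.arctan x)) := by
  obtain ⟨hθ0, hθ1⟩ := arctan_mem hx0 hx1
  set θ := Real.arctan x with hθdef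
  set y := Real.sqrt (1+x^2) with hy
  have hy0 : 0 < y := Real.sqrt_pos.2 (by positivity)
  have hy2 : y^2 = 1+x^2 := Real.sq_sqrt (by positivity)
  have hsin : Real.sin θ = x/y := Real.sin_arctan x
  have hcos : Real.cos θ = 1/y := Real.cos_arctan x
  have hd1 : 0 < y^2 - x/θ := by
    have h := core_TC hx0 hx1; rw [← hθdef] at h; rw [hy2]; linarith
  have hd2 : 0 < θ - Real.sin θ*Real.cos θ := by
    have hslt : Real.sin θ < θ := Real.sin_lt hθ0
    have hsnn : 0 ≤ Real.sin θ := by rw [hsin]; positivity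
    nlinarith [Real.cos_le_one θ]
  have hffx : ff x = (y - x/θ)/(y^2 - x/θ) := by
    unfold ff; rw [← hy, ← hy2]
  have hd9 : (θ - x/y*(1/y)) ≠ 0 := by
    rw [show x/y*(1/y) = Real.sin θ * Real.cos θ by rw [hsin, hcos]]
    exact hd2.ne'
  rw [hffx, hsin, hcos, div_eq_div_iff hd1.ne' hd9]
  field_simp

noncomputable def Uu : ℝ → ℝ := fun t => (1/6 + 5*t/96)/(2/3 - 5*t/12)
noncomputable def Ll : ℝ → ℝ := fun t => ((1 - t^2/2 - 5*t^4/96)*(1/6 - 5*t/96))/(2/3 + 5*t/12)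

lemma phi_bounds {θ : ℝ} (h0 : 0 < θ) (h1 : θ ≤ 1/2) :
    Ll θ ≤ Real.cos θ*(θ - Real.sin θ)/(θ - Real.sin θ*Real.cos θ) ∧
    Real.cos θ*(θ - Real.sin θ)/(θ - Real.sin θ*Real.cos θ) ≤ Uu θ := by
  have habs : |θ| ≤ 1 := by rw [abs_of_pos h0]; linarith
  have habs2 : |2*θ| ≤ 1 := by rw [abs_of_pos (by linarith)]; linarith
  have hsb := Real.sin_bound habs
  have hsb2 := Real.sin_bound habs2
  have hcb := Real.cos_bound habs
  rw [abs_of_pos h0] at hsb hcb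
  rw [abs_of_pos (by linarith : (0:ℝ) < 2*θ)] at hsb2
  rw [abs_le] at hsb hsb2 hcb
  rw [Real.sin_two_mul] at hsb2
  obtain ⟨hs_lo, hs_hi⟩ := hsb
  obtain ⟨h2_lo, h2_hi⟩ := hsb2
  obtain ⟨hc_lo, hc_hi⟩ := hcb
  have hc1 : Real.cos θ ≤ 1 := Real.cos_le_one θ
  have hθ3 : (0:ℝ) < θ^3 := pow_pos h0 3
  have hden_lo : θ^3*(2/3 - 5*θ/12) ≤ θ - Real.sin θ*Real.cos θ := by nlinarith
  have hden_hi : θ - Real.sin θ*Real.cos θ ≤ θ^3*(2/3 + 5*θ/12) := by nlinarith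
  have hden_pos : 0 < θ^3*(2/3 - 5*θ/12) := mul_pos hθ3 (by linarith)
  have hns_lo : θ^3*(1/6 - 5*θ/96) ≤ θ - Real.sin θ := by nlinarith
  have hns_hi : θ - Real.sin θ ≤ θ^3*(1/6 + 5*θ/96) := by nlinarith
  have hns_lo_pos : (0:ℝ) ≤ θ^3*(1/6 - 5*θ/96) := mul_nonneg hθ3.le (by linarith)
  have hns_pos : 0 ≤ θ - Real.sin θ := le_trans hns_lo_pos hns_lo
  have hθ2 : θ^2 ≤ 1/4 := by
    have h := pow_le_pow_left₀ h0.le h1 2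
    norm_num at h; linarith
  have hθ4 : θ^4 ≤ 1/16 := by
    have h := pow_le_pow_left₀ h0.le h1 4
    norm_num at h; linarith
  have hcos_lo_pos : (0:ℝ) ≤ 1 - θ^2/2 - 5*θ^4/96 := by linarith
  have hcos_lo : 1 - θ^2/2 - 5*θ^4/96 ≤ Real.cos θ := by linarith
  have hcos_nn : 0 ≤ Real.cos θ := le_trans hcos_lo_pos hcos_lo
  have hnum_hi : Real.cos θ*(θ - Real.sin θ) ≤ θ^3*(1/6 + 5*θ/96) :=
    le_trans (mul_le_of_le_one_left hns_pos hc1) hns_hi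
  have hnum_lo : (1 - θ^2/2 - 5*θ^4/96)*(θ^3*(1/6 - 5*θ/96)) ≤ Real.cos θ*(θ - Real.sin θ) :=
    mul_le_mul hcos_lo hns_lo hns_lo_pos hcos_nn
  constructor
  · have h := div_le_div₀ (mul_nonneg hcos_nn hns_pos) hnum_lo
      (hden_pos.trans_le hden_lo) hden_hi
    have hLeq : ((1 - θ^2/2 - 5*θ^4/96)*(θ^3*(1/6 - 5*θ/96)))/(θ^3*(2/3 + 5*θ/12)) = Ll θ := by
      unfold Ll
      rw [show (1 - θ^2/2 - 5*θ^4/96)*(θ^3*(1/6 - 5*θ/96))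
        = θ^3*((1 - θ^2/2 - 5*θ^4/96)*(1/6 - 5*θ/96)) by ring,
        mul_div_mul_left _ _ (ne_of_gt hθ3)]
    rwa [hLeq] at h
  · have h := div_le_div₀ (mul_nonneg hθ3.le (by linarith : (0:ℝ) ≤ 1/6 + 5*θ/96)) hnum_hi
      hden_pos hden_lo
    have hUeq : (θ^3*(1/6 + 5*θ/96))/(θ^3*(2/3 - 5*θ/12)) = Uu θ := by
      unfold Uu; rw [mul_div_mul_left _ _ (ne_of_gt hθ3)]
    rwa [hUeq] at h

lemma tendsto_ff_zero : Filter.Tendsto ff (𝓝[Ioo (0:ℝ) 1] 0) (𝓝 (1/4)) := by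
  have hUc : ContinuousAt Uu 0 := by
    unfold Uu
    exact ContinuousAt.div (by fun_prop) (by fun_prop) (by norm_num)
  have hLc : ContinuousAt Ll 0 := by
    unfold Ll
    exact ContinuousAt.div (by fun_prop) (by fun_prop) (by norm_num)
  have hat : Filter.Tendsto Real.arctan (𝓝[Ioo (0:ℝ) 1] 0) (𝓝 0) := by
    have := (Real.continuous_arctan.tendsto 0).mono_left
      (nhdsWithin_le_nhds : 𝓝[Ioo (0:ℝ) 1] 0 ≤ 𝓝 0)
    rwa [Real.arctan_zero] at this
  have hUt : Filter.Tendsto (fun x => Uu (Real.arctan x)) (𝓝[Ioo (0:ℝ) 1] 0) (𝓝 (1/4)) := by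
    have := hUc.tendsto.comp hat
    have hU0 : Uu 0 = 1/4 := by unfold Uu; norm_num
    rwa [hU0] at this
  have hLt : Filter.Tendsto (fun x => Ll (Real.arctan x)) (𝓝[Ioo (0:ℝ) 1] 0) (𝓝 (1/4)) := by
    have := hLc.tendsto.comp hat
    have hL0 : Ll 0 = 1/4 := by unfold Ll; norm_num
    rwa [hL0] at this
  have hsmall : ∀ᶠ x in 𝓝[Ioo (0:ℝ) 1] 0, x < 1/2 :=
    ((isOpen_Iio.eventually_mem (by norm_num : (0:ℝ) ∈ Iio (1/2))).filter_mono
      nhdsWithin_le_nhds)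
  have hev : ∀ᶠ x in 𝓝[Ioo (0:ℝ) 1] 0,
      Ll (Real.arctan x) ≤ ff x ∧ ff x ≤ Uu (Real.arctan x) := by
    filter_upwards [hsmall, eventually_mem_nhdsWithin] with x hx2 hx
    have hθ0 := (arctan_mem hx.1 hx.2).1
    have hθh : Real.arctan x ≤ 1/2 := ((arctan_lt_self' hx.1).trans hx2).le
    rw [ff_eq_phi hx.1 hx.2]
    exact phi_bounds hθ0 hθh
  exact tendsto_of_tendsto_of_tendsto_of_le_of_le' hLt hUt
    (hev.mono fun x h => h.1) (hev.mono fun x h => h.2)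

lemma part2 (α : ℝ) :
    (∀ a b : ℝ, 0 < a → 0 < b → a ≠ b →
      α * Cmean a b + (1 - α) * Tmean a b < Smean a b) ↔ α ≤ A0 := by
  constructor
  · intro h
    have key : ∀ x ∈ Ioo (0:ℝ) 1, α ≤ ff x := by
      intro x hx
      obtain ⟨hC, hS, hT⟩ := means_at hx.1 hx.2
      have hh := h (1+x) (1-x) (by linarith [hx.1]) (by linarith [hx.2])
        (by intro he; nlinarith [hx.1])
      rw [hC, hS, hT] at hh
      have hD : 0 < (1+x^2) - x/Real.arctan x := by
        have := core_TC hx.1 hx.2; linarith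
      unfold ff
      rw [le_div_iff₀ hD]
      nlinarith [hh]
    haveI := nebot_one
    exact ge_of_tendsto tendsto_ff_one (eventually_nhdsWithin_of_forall key)
  · intro hα a b ha hb hne
    obtain ⟨h1, _, hTC⟩ := part1 ha hb hne
    have hprod : 0 ≤ (A0 - α)*(Cmean a b - Tmean a b) :=
      mul_nonneg (by linarith) (by linarith)
    nlinarith [h1, hprod]

lemma part3 (β : ℝ) :
    (∀ a b : ℝ, 0 < a → 0 < b → a ≠ b →
      Smean a b < β * Cmean a b + (1 - β) * Tmean a b) ↔ β ≥ 1/4 := by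
  constructor
  · intro h
    have key : ∀ x ∈ Ioo (0:ℝ) 1, ff x ≤ β := by
      intro x hx
      obtain ⟨hC, hS, hT⟩ := means_at hx.1 hx.2
      have hh := h (1+x) (1-x) (by linarith [hx.1]) (by linarith [hx.2])
        (by intro he; nlinarith [hx.1])
      rw [hC, hS, hT] at hh
      have hD : 0 < (1+x^2) - x/Real.arctan x := by
        have := core_TC hx.1 hx.2; linarith
      unfold ff
      rw [div_le_iff₀ hD]
      nlinarith [hh]
    haveI := nebot_zero
    exact le_of_tendsto tendsto_ff_zero (eventually_nhdsWithin_of_forall key)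
  · intro hβ a b ha hb hne
    obtain ⟨_, h2, hTC⟩ := part1 ha hb hne
    have hprod : 0 ≤ (β - 1/4)*(Cmean a b - Tmean a b) :=
      mul_nonneg (by linarith) (by linarith)
    nlinarith [h2, hprod]

theorem sharp_stmt_16 :
    (∀ a b : ℝ, 0 < a → 0 < b → a ≠ b →
        ((Real.pi - 2 * Real.sqrt 2) / (Real.sqrt 2 * Real.pi - 2 * Real.sqrt 2)) * Cmean a b + (1 - ((Real.pi - 2 * Real.sqrt 2) / (Real.sqrt 2 * Real.pi - 2 * Real.sqrt 2))) * Tmean a b < Smean a b ∧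
        Smean a b < (1 / 4) * Cmean a b + (1 - (1 / 4)) * Tmean a b) ∧
    (∀ α : ℝ, (∀ a b : ℝ, 0 < a → 0 < b → a ≠ b →
        α * Cmean a b + (1 - α) * Tmean a b < Smean a b) ↔ α ≤ ((Real.pi - 2 * Real.sqrt 2) / (Real.sqrt 2 * Real.pi - 2 * Real.sqrt 2))) ∧
    (∀ β : ℝ, (∀ a b : ℝ, 0 < a → 0 < b → a ≠ b →
        Smean a b < β * Cmean a b + (1 - β) * Tmean a b) ↔ β ≥ (1 / 4)) := by
  have hA0 : (Real.pi - 2 * Real.sqrt 2) / (Real.sqrt 2 * Real.pi - 2 * Real.sqrt 2) = A0 := rfl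
  have h34 : (1:ℝ) - 1/4 = 3/4 := by norm_num
  refine ⟨?_, ?_, ?_⟩
  · intro a b ha hb hne
    obtain ⟨h1, h2, _⟩ := part1 ha hb hne
    refine ⟨?_, ?_⟩
    · rw [hA0]; exact h1
    · rw [h34]; exact h2
  · intro α
    rw [hA0]
    exact part2 α
  · exact part3
end

section
/- For all a, b > 0 with a ≠ b, (2/π)·A(a,b) + (1 - 2/π)·G(a,b) < P(a,b) < (2/3)·A(a,b) + (1/3)·G(a,b), and the constants 2/π and 2/3 are best possible. -/
open Real

open Set Filter Topology


lemma tanDivMono : StrictMonoOn (fun v : ℝ => Real.tan v / v) (Set.Ioo 0 (π/2)) := by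
  have hconv : Convex ℝ (Set.Ioo (0:ℝ) (π/2)) := convex_Ioo _ _
  apply StrictMonoOn.mono (s := Set.Ioo 0 (π/2)) ?_ le_rfl
  apply strictMonoOn_of_deriv_pos hconv
  · apply ContinuousOn.div
    · exact Real.continuousOn_tan.mono (fun v hv => by
        simp only [mem_setOf_eq]
        exact (Real.cos_pos_of_mem_Ioo ⟨by linarith [hv.1, Real.pi_pos], hv.2⟩).ne')
    · exact continuousOn_id
    · exact fun v hv => hv.1.ne'
  · intro v hv
    rw [interior_Ioo] at hv
    obtain ⟨hv0, hv2⟩ := hv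
    have hcos : 0 < Real.cos v := Real.cos_pos_of_mem_Ioo ⟨by linarith, hv2⟩
    have hd : HasDerivAt (fun v : ℝ => Real.tan v / v)
        ((1 / Real.cos v ^ 2 * v - Real.tan v * 1) / v ^ 2) v :=
      (Real.hasDerivAt_tan hcos.ne').div (hasDerivAt_id v) hv0.ne'
    rw [hd.deriv]
    have hsin : Real.sin v * Real.cos v < v := by
      have := Real.sin_lt (x := 2*v) (by linarith)
      have h2 : Real.sin (2*v) = 2 * Real.sin v * Real.cos v := Real.sin_two_mul v
      linarith [h2 ▸ this]
    have htan : Real.tan v = Real.sin v / Real.cos v := Real.tan_eq_sin_div_cos v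
    have : 0 < 1 / Real.cos v ^ 2 * v - Real.tan v * 1 := by
      rw [htan]
      have : 1 / Real.cos v ^ 2 * v - Real.sin v / Real.cos v * 1
          = (v - Real.sin v * Real.cos v) / Real.cos v ^ 2 := by
        field_simp
      rw [this]
      exact div_pos (by linarith) (by positivity)
    positivity

lemma half_identity (t : ℝ) :
    Real.cos t = 1 - 2 * Real.sin (t/2) ^ 2 ∧
    Real.sin t = 2 * Real.sin (t/2) * Real.cos (t/2) := by
  constructor
  · have := Real.cos_two_mul (t/2)
    rw [show 2 * (t/2) = t by ring, Real.cos_sq'] at this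
    linarith
  · have := Real.sin_two_mul (t/2)
    rw [show 2 * (t/2) = t by ring] at this
    linarith

lemma derL (t : ℝ) : HasDerivAt (fun t : ℝ => π * Real.sin t - 2*t - (π-2) * (t * Real.cos t))
    (2 * Real.cos t - 2 + (π-2) * (t * Real.sin t)) t := by
  have h1 : HasDerivAt (fun t : ℝ => π * Real.sin t) (π * Real.cos t) t :=
    (Real.hasDerivAt_sin t).const_mul π
  have h2 : HasDerivAt (fun t : ℝ => 2*t) 2 t := by simpa using (hasDerivAt_id t).const_mul (2:ℝ)
  have h3 : HasDerivAt (fun t : ℝ => t * Real.cos t)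
      (1 * Real.cos t + t * (-Real.sin t)) t := by
    simpa using (hasDerivAt_id t).fun_mul (Real.hasDerivAt_cos t)
  have := (h1.fun_sub h2).fun_sub (h3.const_mul (π-2))
  refine this.congr_deriv ?_
  ring

lemma contL : Continuous (fun t : ℝ => π * Real.sin t - 2*t - (π-2) * (t * Real.cos t)) := by
  continuity

lemma key_L {x : ℝ} (hx0 : 0 < x) (hx : x < π/2) :
    2*x + (π-2) * (x * Real.cos x) < π * Real.sin x := by
  set L : ℝ → ℝ := fun t => π * Real.sin t - 2*t - (π-2) * (t * Real.cos t) with hL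
  -- derivative sign at interior points
  have hsign : ∀ t : ℝ, 0 < t → t < π/2 →
      2 * Real.cos t - 2 + (π-2) * (t * Real.sin t)
        = 4 * Real.sin (t/2) * Real.cos (t/2) * ((π-2) * (t/2) - Real.tan (t/2)) := by
    intro t ht0 ht2
    obtain ⟨hc, hs⟩ := half_identity t
    have hcu : 0 < Real.cos (t/2) := Real.cos_pos_of_mem_Ioo ⟨by linarith [Real.pi_pos], by linarith⟩
    rw [hc, hs, Real.tan_eq_sin_div_cos]
    field_simp
    ring
  have hmemx : x/2 ∈ Set.Ioo (0:ℝ) (π/2) := ⟨by linarith, by linarith⟩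
  rcases le_or_gt (Real.tan (x/2)) ((π-2) * (x/2)) with hca | hcb
  · -- increasing on [0, x]
    have hmono : StrictMonoOn L (Set.Icc 0 x) := by
      apply strictMonoOn_of_deriv_pos (convex_Icc _ _) contL.continuousOn
      intro t ht
      rw [interior_Icc] at ht
      obtain ⟨ht0, htx⟩ := ht
      rw [(derL t).deriv, hsign t ht0 (by linarith)]
      have hmem : t/2 ∈ Set.Ioo (0:ℝ) (π/2) := ⟨by linarith, by linarith⟩
      have hlt : Real.tan (t/2) / (t/2) < Real.tan (x/2) / (x/2) :=
        tanDivMono hmem hmemx (by linarith)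
      have hx2 : (0:ℝ) < x/2 := by linarith
      have ht2 : (0:ℝ) < t/2 := by linarith
      have h1 : Real.tan (x/2) / (x/2) ≤ π - 2 := by
        rw [div_le_iff₀ hx2]; linarith [mul_comm (π-2) (x/2)]
      have h2 : Real.tan (t/2) < (π-2) * (t/2) := by
        have := (div_lt_iff₀ ht2).mp (lt_of_lt_of_le hlt h1)
        linarith [mul_comm (π-2) (t/2)]
      have hsu : 0 < Real.sin (t/2) := Real.sin_pos_of_pos_of_lt_pi ht2 (by linarith [Real.pi_pos])
      have hcu : 0 < Real.cos (t/2) := Real.cos_pos_of_mem_Ioo ⟨by linarith [Real.pi_pos], hmem.2⟩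
      have : 0 < (π-2) * (t/2) - Real.tan (t/2) := by linarith
      positivity
    have h0 : L 0 = 0 := by simp [hL]
    have := hmono (Set.mem_Icc.2 ⟨le_refl 0, hx0.le⟩) (Set.mem_Icc.2 ⟨hx0.le, le_refl x⟩) hx0
    rw [h0] at this
    simp only [hL] at this
    linarith
  · -- decreasing on [x, π/2]
    have hmono : StrictAntiOn L (Set.Icc x (π/2)) := by
      apply strictAntiOn_of_deriv_neg (convex_Icc _ _) contL.continuousOn
      intro t ht
      rw [interior_Icc] at ht
      obtain ⟨htx, ht2⟩ := ht
      have ht0 : 0 < t := lt_trans hx0 htx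
      rw [(derL t).deriv, hsign t ht0 ht2]
      have hmem : t/2 ∈ Set.Ioo (0:ℝ) (π/2) := ⟨by linarith, by linarith⟩
      have hlt : Real.tan (x/2) / (x/2) < Real.tan (t/2) / (t/2) :=
        tanDivMono hmemx hmem (by linarith)
      have hx2 : (0:ℝ) < x/2 := by linarith
      have ht2' : (0:ℝ) < t/2 := by linarith
      have h1 : π - 2 < Real.tan (x/2) / (x/2) := by
        rw [lt_div_iff₀ hx2]; linarith [mul_comm (π-2) (x/2)]
      have h2 : (π-2) * (t/2) < Real.tan (t/2) := by
        have := (lt_div_iff₀ ht2').mp (lt_trans h1 hlt)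
        linarith [mul_comm (π-2) (t/2)]
      have hsu : 0 < Real.sin (t/2) := Real.sin_pos_of_pos_of_lt_pi ht2' (by linarith [Real.pi_pos])
      have hcu : 0 < Real.cos (t/2) := Real.cos_pos_of_mem_Ioo ⟨by linarith [Real.pi_pos], hmem.2⟩
      have hneg : (π-2) * (t/2) - Real.tan (t/2) < 0 := by linarith
      have hpos : 0 < 4 * Real.sin (t/2) * Real.cos (t/2) := by positivity
      exact mul_neg_of_pos_of_neg hpos hneg
    have hpi : L (π/2) = 0 := by
      simp [hL, Real.sin_pi_div_two, Real.cos_pi_div_two]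
      ring
    have := hmono (Set.mem_Icc.2 ⟨le_refl x, hx.le⟩)
      (Set.mem_Icc.2 ⟨hx.le, le_refl _⟩) hx
    rw [hpi] at this
    simp only [hL] at this
    linarith

lemma key_U {x : ℝ} (hx0 : 0 < x) (hx : x < π/2) :
    3 * Real.sin x < 2*x + x * Real.cos x := by
  set U : ℝ → ℝ := fun t => 2*t + t * Real.cos t - 3 * Real.sin t with hU
  have hder : ∀ t : ℝ, HasDerivAt U (2 - 2 * Real.cos t - t * Real.sin t) t := by
    intro t
    have h1 : HasDerivAt (fun t : ℝ => 2*t) 2 t := by simpa using (hasDerivAt_id t).const_mul (2:ℝ)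
    have h2 : HasDerivAt (fun t : ℝ => t * Real.cos t)
        (1 * Real.cos t + t * (-Real.sin t)) t := by
      simpa using (hasDerivAt_id t).fun_mul (Real.hasDerivAt_cos t)
    have h3 : HasDerivAt (fun t : ℝ => 3 * Real.sin t) (3 * Real.cos t) t :=
      (Real.hasDerivAt_sin t).const_mul 3
    have := (h1.fun_add h2).fun_sub h3
    refine this.congr_deriv ?_
    ring
  have hmono : StrictMonoOn U (Set.Icc 0 (π/2)) := by
    apply strictMonoOn_of_deriv_pos (convex_Icc _ _)
    · exact (((continuous_const.mul continuous_id).add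
        (continuous_id.mul Real.continuous_cos)).sub
        (continuous_const.mul Real.continuous_sin)).continuousOn
    · intro t ht
      rw [interior_Icc] at ht
      obtain ⟨ht0, ht2⟩ := ht
      rw [(hder t).deriv]
      obtain ⟨hc, hs⟩ := half_identity t
      have hu0 : 0 < t/2 := by linarith
      have hu2 : t/2 < π/2 := by linarith [Real.pi_pos]
      have hcu : 0 < Real.cos (t/2) := Real.cos_pos_of_mem_Ioo ⟨by linarith, hu2⟩
      have hsu : 0 < Real.sin (t/2) := Real.sin_pos_of_pos_of_lt_pi hu0 (by linarith [Real.pi_pos])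
      have htan : t/2 < Real.tan (t/2) := Real.lt_tan hu0 hu2
      rw [Real.tan_eq_sin_div_cos, lt_div_iff₀ hcu] at htan
      have : 2 - 2 * Real.cos t - t * Real.sin t
          = 4 * Real.sin (t/2) * (Real.sin (t/2) - (t/2) * Real.cos (t/2)) := by
        rw [hc, hs]; ring
      rw [this]
      have : 0 < Real.sin (t/2) - (t/2) * Real.cos (t/2) := by linarith
      positivity
  have h0 : U 0 = 0 := by simp [hU]
  have := hmono (Set.mem_Icc.2 ⟨le_refl 0, by linarith [Real.pi_pos]⟩)
    (Set.mem_Icc.2 ⟨hx0.le, hx.le⟩) hx0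
  rw [h0] at this
  simp only [hU] at this
  linarith

lemma main_ord {a b : ℝ} (hb : 0 < b) (hab : b < a) :
    (2/π) * Amean a b + (1 - 2/π) * Gmean a b < Pmean a b ∧
    Pmean a b < (2/3) * Amean a b + (1 - 2/3) * Gmean a b := by
  have ha : 0 < a := lt_trans hb hab
  have hs : 0 < a + b := by linarith
  set t : ℝ := (a - b) / (a + b) with htdef
  have ht0 : 0 < t := div_pos (by linarith) hs
  have ht1 : t < 1 := (div_lt_one hs).2 (by linarith)
  set x : ℝ := Real.arcsin t with hxdef
  have hx0 : 0 < x := Real.arcsin_pos.2 ht0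
  have hx2 : x < π/2 := Real.arcsin_lt_pi_div_two.2 ht1
  have hsin : Real.sin x = t := Real.sin_arcsin (by linarith) ht1.le
  have hA : 0 < Amean a b := by unfold Amean; linarith
  have hG : Gmean a b = Amean a b * Real.cos x := by
    rw [hxdef, Real.cos_arcsin]
    have h1 : 1 - t^2 = a*b * (2/(a+b))^2 := by
      rw [htdef]; field_simp; ring
    rw [h1, Real.sqrt_mul (by positivity), Real.sqrt_sq (by positivity)]
    unfold Gmean Amean
    field_simp
  have hP : Pmean a b = Amean a b * (Real.sin x / x) := by
    unfold Pmean Amean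
    rw [← htdef, ← hxdef, hsin]
    have hane : a - b = (a+b) * t := by rw [htdef]; field_simp
    rw [hane]
    field_simp
  have hpi : (0:ℝ) < π := Real.pi_pos
  constructor
  · have key := key_L hx0 hx2
    rw [hG, hP]
    have e1 : (2/π) * Amean a b + (1 - 2/π) * (Amean a b * Real.cos x)
        = Amean a b * ((2*x + (π-2) * (x * Real.cos x)) / (π*x)) := by
      field_simp
    have e2 : Amean a b * (Real.sin x / x) = Amean a b * ((π * Real.sin x) / (π*x)) := by
      rw [mul_div_mul_left _ _ hpi.ne']
    rw [e1, e2]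
    gcongr
  · have key := key_U hx0 hx2
    rw [hG, hP]
    have e1 : (2/3) * Amean a b + (1 - 2/3) * (Amean a b * Real.cos x)
        = Amean a b * ((2*x + x * Real.cos x) / (3*x)) := by
      field_simp
      ring
    have e2 : Amean a b * (Real.sin x / x) = Amean a b * ((3 * Real.sin x) / (3*x)) := by
      rw [mul_div_mul_left _ _ (by norm_num : (3:ℝ) ≠ 0)]
    rw [e1, e2]
    gcongr

lemma Amean_comm (a b : ℝ) : Amean a b = Amean b a := by unfold Amean; ring_nf
lemma Gmean_comm (a b : ℝ) : Gmean a b = Gmean b a := by unfold Gmean; rw [mul_comm]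
lemma Pmean_comm (a b : ℝ) : Pmean a b = Pmean b a := by
  unfold Pmean
  rw [show b - a = -(a-b) by ring, show b + a = a + b by ring,
    show -(a-b)/(a+b) = -((a-b)/(a+b)) by ring, Real.arcsin_neg, mul_neg, neg_div_neg_eq]

lemma main_all {a b : ℝ} (ha : 0 < a) (hb : 0 < b) (hne : a ≠ b) :
    (2/π) * Amean a b + (1 - 2/π) * Gmean a b < Pmean a b ∧
    Pmean a b < (2/3) * Amean a b + (1 - 2/3) * Gmean a b := by
  rcases hne.lt_or_gt with h | h
  · rw [Amean_comm, Gmean_comm, Pmean_comm]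
    exact main_ord ha h
  · exact main_ord hb h

lemma G_lt_A {a b : ℝ} (ha : 0 < a) (hb : 0 < b) (hne : a ≠ b) : Gmean a b < Amean a b := by
  unfold Gmean Amean
  rw [Real.sqrt_mul ha.le]
  have h2 : Real.sqrt a ^ 2 = a := Real.sq_sqrt ha.le
  have h3 : Real.sqrt b ^ 2 = b := Real.sq_sqrt hb.le
  have h4 : Real.sqrt a ≠ Real.sqrt b := fun h => hne (by rw [← h2, ← h3, h])
  have h6 : Real.sqrt a - Real.sqrt b ≠ 0 := sub_ne_zero.2 h4
  have h5 : 0 < (Real.sqrt a - Real.sqrt b)^2 := (Even.pow_pos_iff (by norm_num) two_ne_zero).2 h6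
  nlinarith [h2, h3, h5]

lemma alpha_sharp (α : ℝ)
    (h : ∀ a b : ℝ, 0 < a → 0 < b → a ≠ b →
      α * Amean a b + (1 - α) * Gmean a b < Pmean a b) : α ≤ 2/π := by
  have key : ∀ t : ℝ, t ∈ Set.Ioo (0:ℝ) 1 →
      α + (1-α) * Real.sqrt (1 - t^2) ≤ t / Real.arcsin t := by
    rintro t ⟨ht0, ht1⟩
    have := h (1+t) (1-t) (by linarith) (by linarith) (by intro heq; nlinarith)
    have hA : Amean (1+t) (1-t) = 1 := by unfold Amean; ring_nf
    have hG : Gmean (1+t) (1-t) = Real.sqrt (1 - t^2) := by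
      unfold Gmean; rw [show (1+t)*(1-t) = 1 - t^2 by ring]
    have hP : Pmean (1+t) (1-t) = t / Real.arcsin t := by
      unfold Pmean
      rw [show (1+t)-(1-t) = 2*t by ring, show (1+t)+(1-t) = 2 by ring,
        show (2*t)/2 = t by ring, show 2*t = t*2 by ring, mul_comm 2 (Real.arcsin t),
        mul_div_mul_right _ _ two_ne_zero]
    rw [hA, hG, hP] at this
    linarith
  have hlim1 : Tendsto (fun t : ℝ => α + (1-α) * Real.sqrt (1 - t^2)) (𝓝[<] 1) (𝓝 α) := by
    apply tendsto_nhdsWithin_of_tendsto_nhds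
    have hc : Continuous fun t : ℝ => α + (1-α) * Real.sqrt (1 - t^2) := by
      continuity
    have := hc.tendsto 1
    simpa using this
  have hlim2 : Tendsto (fun t : ℝ => t / Real.arcsin t) (𝓝[<] 1) (𝓝 (2/π)) := by
    apply tendsto_nhdsWithin_of_tendsto_nhds
    have h1 : Tendsto (fun t : ℝ => t / Real.arcsin t) (𝓝 1) (𝓝 (1 / Real.arcsin 1)) := by
      apply Tendsto.div tendsto_id (Real.continuous_arcsin.tendsto 1)
      rw [Real.arcsin_one]
      positivity
    rw [Real.arcsin_one, one_div_div] at h1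
    exact h1
  have hev : ∀ᶠ t in 𝓝[<] (1:ℝ), (fun t : ℝ => α + (1-α) * Real.sqrt (1 - t^2)) t
      ≤ (fun t : ℝ => t / Real.arcsin t) t := by
    filter_upwards [eventually_mem_nhdsWithin,
      eventually_nhdsWithin_of_eventually_nhds (eventually_gt_nhds zero_lt_one)] with t h1 h2
    exact key t ⟨h2, h1⟩
  exact le_of_tendsto_of_tendsto hlim1 hlim2 hev

lemma beta_sharp (β : ℝ)
    (h : ∀ a b : ℝ, 0 < a → 0 < b → a ≠ b →
      Pmean a b < β * Amean a b + (1 - β) * Gmean a b) : β ≥ 2/3 := by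
  rcases le_or_gt 1 β with hβ | hβ
  · linarith
  have h1β : 0 < 1 - β := by linarith
  have key : ∀ x : ℝ, x ∈ Set.Ioo (0:ℝ) 1 →
      (1-β) * (1/2 - x^2*(5/96)) ≤ 1/6 + x*(5/96) := by
    rintro x ⟨hx0, hx1⟩
    have hx2 : x < π/2 := by nlinarith [Real.pi_gt_three]
    have hsin0 : 0 < Real.sin x := Real.sin_pos_of_pos_of_lt_pi hx0 (by nlinarith [Real.pi_gt_three])
    have hcos0 : 0 < Real.cos x := Real.cos_pos_of_mem_Ioo ⟨by nlinarith [Real.pi_gt_three], hx2⟩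
    have hsin1 : Real.sin x < 1 := by
      nlinarith [Real.sin_sq_add_cos_sq x]
    have hmain := h (1 + Real.sin x) (1 - Real.sin x) (by linarith) (by linarith)
      (by intro heq; nlinarith)
    have hA : Amean (1 + Real.sin x) (1 - Real.sin x) = 1 := by unfold Amean; ring_nf
    have hG : Gmean (1 + Real.sin x) (1 - Real.sin x) = Real.cos x := by
      unfold Gmean
      rw [show (1 + Real.sin x)*(1 - Real.sin x) = Real.cos x ^ 2 by
        nlinarith [Real.sin_sq_add_cos_sq x]]
      exact Real.sqrt_sq hcos0.le
    have hP : Pmean (1 + Real.sin x) (1 - Real.sin x) = Real.sin x / x := by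
      unfold Pmean
      rw [show (1 + Real.sin x)-(1 - Real.sin x) = Real.sin x * 2 by ring,
        show (1 + Real.sin x)+(1 - Real.sin x) = 2 by ring,
        show (Real.sin x * 2)/2 = Real.sin x by ring,
        Real.arcsin_sin (by linarith [Real.pi_pos]) (by linarith),
        mul_comm 2 x, mul_div_mul_right _ _ two_ne_zero]
    rw [hA, hG, hP] at hmain
    have h2 : Real.sin x < (β + (1-β) * Real.cos x) * x := by
      rw [← div_lt_iff₀ hx0] at *
      linarith [hmain]
    have habs : |x| ≤ 1 := by rw [abs_of_pos hx0]; linarith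
    have hcb := Real.cos_bound habs
    have hsb := Real.sin_bound habs
    rw [abs_le, abs_of_pos hx0] at hcb hsb
    -- cos x ≤ 1 - x^2/2 + x^4*(5/96), sin x ≥ x - x^3/6 - x^4*(5/96)
    have hcu : Real.cos x ≤ 1 - x^2/2 + x^4*(5/96) := by linarith [hcb.2]
    have hsl : x - x^3/6 - x^4*(5/96) ≤ Real.sin x := by nlinarith [hsb.1, pow_succ x 4, mul_le_mul_of_nonneg_left hx1.le (pow_pos hx0 4).le]
    have hstep : (1-β) * (x * (x^2/2 - x^4*(5/96))) < x^3/6 + x^4*(5/96) := by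
      have e1 : (1-β) * (x * (1 - Real.cos x)) < x - Real.sin x := by nlinarith [h2]
      have e2 : (1-β) * (x * (x^2/2 - x^4*(5/96))) ≤ (1-β) * (x * (1 - Real.cos x)) := by
        apply mul_le_mul_of_nonneg_left _ h1β.le
        apply mul_le_mul_of_nonneg_left _ hx0.le
        linarith
      linarith
    have hfin : ((1-β) * (1/2 - x^2*(5/96))) * x^3 < (1/6 + x*(5/96)) * x^3 := by
      nlinarith [hstep]
    exact (lt_of_mul_lt_mul_right hfin (by positivity)).le
  have hlim1 : Tendsto (fun x : ℝ => (1-β) * (1/2 - x^2*(5/96))) (𝓝[>] 0)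
      (𝓝 ((1-β) * (1/2))) := by
    apply tendsto_nhdsWithin_of_tendsto_nhds
    have hc : Continuous fun x : ℝ => (1-β) * (1/2 - x^2*(5/96)) := by continuity
    have := hc.tendsto 0
    simpa using this
  have hlim2 : Tendsto (fun x : ℝ => 1/6 + x*(5/96)) (𝓝[>] 0) (𝓝 (1/6 : ℝ)) := by
    apply tendsto_nhdsWithin_of_tendsto_nhds
    have hc : Continuous fun x : ℝ => 1/6 + x*(5/96) := by continuity
    have := hc.tendsto 0
    simpa using this
  have hev : ∀ᶠ x in 𝓝[>] (0:ℝ), (fun x : ℝ => (1-β) * (1/2 - x^2*(5/96))) x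
      ≤ (fun x : ℝ => 1/6 + x*(5/96)) x := by
    filter_upwards [eventually_mem_nhdsWithin,
      eventually_nhdsWithin_of_eventually_nhds (eventually_lt_nhds zero_lt_one)] with t h1 h2
    exact key t ⟨h1, h2⟩
  have := le_of_tendsto_of_tendsto hlim1 hlim2 hev
  linarith


theorem sharp_stmt_17 :
    (∀ a b : ℝ, 0 < a → 0 < b → a ≠ b →
        (2 / Real.pi) * Amean a b + (1 - (2 / Real.pi)) * Gmean a b < Pmean a b ∧
        Pmean a b < (2 / 3) * Amean a b + (1 - (2 / 3)) * Gmean a b) ∧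
    (∀ α : ℝ, (∀ a b : ℝ, 0 < a → 0 < b → a ≠ b →
        α * Amean a b + (1 - α) * Gmean a b < Pmean a b) ↔ α ≤ (2 / Real.pi)) ∧
    (∀ β : ℝ, (∀ a b : ℝ, 0 < a → 0 < b → a ≠ b →
        Pmean a b < β * Amean a b + (1 - β) * Gmean a b) ↔ β ≥ (2 / 3)) := by
  refine ⟨fun a b ha hb hne => main_all ha hb hne, fun α => ⟨alpha_sharp α, ?_⟩,
    fun β => ⟨beta_sharp β, ?_⟩⟩
  · intro hα a b ha hb hne
    have hGA := G_lt_A ha hb hne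
    have hm := (main_all ha hb hne).1
    have step : α * Amean a b + (1 - α) * Gmean a b
        ≤ (2/π) * Amean a b + (1 - 2/π) * Gmean a b := by
      nlinarith [mul_nonneg (sub_nonneg.2 hα) (sub_nonneg.2 hGA.le)]
    linarith
  · intro hβ a b ha hb hne
    have hGA := G_lt_A ha hb hne
    have hm := (main_all ha hb hne).2
    have step : (2/3) * Amean a b + (1 - 2/3) * Gmean a b
        ≤ β * Amean a b + (1 - β) * Gmean a b := by
      nlinarith [mul_nonneg (sub_nonneg.2 hβ) (sub_nonneg.2 hGA.le)]
    linarith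
end
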